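/- arXiv:2006.07225 — 3 statements merged into one kernel-verified Lean document; each statement's English description precedes it below -/
import Mathlib

section
/- Choosing f*(x,y,z) = 1 + log( p(x,y,z)/(p(x|z)p(y,z)) ) makes the NWJ lower bound tight: E_{p(x,y,z)}[f*] − e^{−1} E_{p(x|z)p(y,z)}[exp f*] = I(X;Y|Z). -/
open MeasureTheory Real

/-- Conditional mutual information `I(X;Y|Z)` expressed through the joint density
`p : A → B → C → ℝ` (here `A` is the range of `X`, `B` of `Y`, `C` of `Z`):
`I(X;Y|Z) = ∫ p log (p / (p(x|z) p(y,z))) = ∫ p log (p ⬝ p_Z / (p_{XZ} ⬝ p_{YZ}))`. -/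
noncomputable def condMI {A B C : Type*} [MeasurableSpace A] [MeasurableSpace B]
    [MeasurableSpace C] (μA : Measure A) (μB : Measure B) (μC : Measure C)
    (p : A → B → C → ℝ) : ℝ :=
  ∫ a, ∫ b, ∫ c, p a b c *
      Real.log (p a b c * (∫ a', ∫ b', p a' b' c ∂μB ∂μA) /
        ((∫ b', p a b' c ∂μB) * (∫ a', p a' b c ∂μA))) ∂μC ∂μB ∂μA

/-- The product density `p(x|z) p(y,z) = p_{XZ}(x,z) p_{YZ}(y,z) / p_Z(z)`. -/
noncomputable def prodDensity {A B C : Type*} [MeasurableSpace A] [MeasurableSpace B]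
    (μA : Measure A) (μB : Measure B) (p : A → B → C → ℝ) (a : A) (b : B) (c : C) : ℝ :=
  (∫ b', p a b' c ∂μB) * (∫ a', p a' b c ∂μA) / (∫ a', ∫ b', p a' b' c ∂μB ∂μA)

/-- Choosing `f*(x,y,z) = 1 + log(p(x,y,z)/(p(x|z)p(y,z)))` makes the NWJ lower
bound tight: it equals `I(X;Y|Z)`.  The densities are assumed bounded away from `0`
and `∞` on finite-measure spaces. -/
theorem nwj_tight {A B C : Type*} [MeasurableSpace A] [MeasurableSpace B]
    [MeasurableSpace C] (μA : Measure A) (μB : Measure B) (μC : Measure C)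
    [IsFiniteMeasure μA] [IsFiniteMeasure μB] [IsFiniteMeasure μC]
    (p : A → B → C → ℝ) (al bu : ℝ) (hal : 0 < al)
    (hp : Measurable fun w : A × B × C => p w.1 w.2.1 w.2.2)
    (hbound : ∀ a b c, p a b c ∈ Set.Icc al bu)
    (hqbound : ∀ a b c, prodDensity μA μB p a b c ∈ Set.Icc al bu)
    (hp1 : ∫ a, ∫ b, ∫ c, p a b c ∂μC ∂μB ∂μA = 1) :
    (∫ a, ∫ b, ∫ c,
        p a b c * (1 + Real.log (p a b c / prodDensity μA μB p a b c)) ∂μC ∂μB ∂μA) -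
        Real.exp (-1) * (∫ a, ∫ b, ∫ c, prodDensity μA μB p a b c *
          Real.exp (1 + Real.log (p a b c / prodDensity μA μB p a b c)) ∂μC ∂μB ∂μA)
      = condMI μA μB μC p := by
  -- nonemptiness
  have hA : Nonempty A := by
    by_contra h
    rw [not_nonempty_iff] at h
    simp [integral_of_isEmpty] at hp1
  have hB : Nonempty B := by
    by_contra h
    rw [not_nonempty_iff] at h
    simp [integral_of_isEmpty] at hp1
  have hC : Nonempty C := by
    by_contra h
    rw [not_nonempty_iff] at h
    simp [integral_of_isEmpty] at hp1
  obtain ⟨a0⟩ := hA; obtain ⟨b0⟩ := hB; obtain ⟨c0⟩ := hC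
  have halbu : al ≤ bu := le_trans (hbound a0 b0 c0).1 (hbound a0 b0 c0).2
  have hbu : 0 < bu := lt_of_lt_of_le hal halbu
  -- positivity
  have hppos : ∀ a b c, 0 < p a b c := fun a b c => lt_of_lt_of_le hal (hbound a b c).1
  have hqpos : ∀ a b c, 0 < prodDensity μA μB p a b c :=
    fun a b c => lt_of_lt_of_le hal (hqbound a b c).1
  have hne : ∀ a b c, ((∫ b', p a b' c ∂μB) * (∫ a', p a' b c ∂μA)) ≠ 0 ∧
      (∫ a', ∫ b', p a' b' c ∂μB ∂μA) ≠ 0 := by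
    intro a b c
    have h := (hqpos a b c).ne'
    rw [prodDensity, div_ne_zero_iff] at h
    exact h
  -- key pointwise identity for the log
  have hkey : ∀ a b c, p a b c / prodDensity μA μB p a b c =
      p a b c * (∫ a', ∫ b', p a' b' c ∂μB ∂μA) /
        ((∫ b', p a b' c ∂μB) * (∫ a', p a' b c ∂μA)) := by
    intro a b c
    rw [prodDensity]
    rw [div_div_eq_mul_div]
  -- pointwise identity for the second integrand
  have hexp : ∀ a b c, prodDensity μA μB p a b c *
      Real.exp (1 + Real.log (p a b c / prodDensity μA μB p a b c)) =
      Real.exp 1 * p a b c := by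
    intro a b c
    rw [Real.exp_add, Real.exp_log (div_pos (hppos a b c) (hqpos a b c))]
    rw [mul_comm, mul_assoc, div_mul_cancel₀ _ (hqpos a b c).ne']
  -- pointwise identity for the first integrand
  have hsplit : ∀ a b c, p a b c * (1 + Real.log (p a b c / prodDensity μA μB p a b c)) =
      p a b c * Real.log (p a b c * (∫ a', ∫ b', p a' b' c ∂μB ∂μA) /
        ((∫ b', p a b' c ∂μB) * (∫ a', p a' b c ∂μA))) + p a b c := by
    intro a b c
    rw [← hkey a b c]
    ring
  -- the second integral equals exp 1
  have E2 : (∫ a, ∫ b, ∫ c, prodDensity μA μB p a b c *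
      Real.exp (1 + Real.log (p a b c / prodDensity μA μB p a b c)) ∂μC ∂μB ∂μA)
      = Real.exp 1 := by
    simp_rw [hexp, integral_const_mul]
    rw [hp1, mul_one]
  -- measurability of everything in sight
  have hXm : Measurable fun w : A × C => ∫ b, p w.1 b w.2 ∂μB := by
    have hF : Measurable fun w : (A × C) × B => p w.1.1 w.2 w.1.2 :=
      hp.comp ((measurable_fst.fst).prodMk ((measurable_snd).prodMk measurable_fst.snd))
    exact hF.stronglyMeasurable.integral_prod_right'.measurable
  have hYm : Measurable fun w : B × C => ∫ a, p a w.1 w.2 ∂μA := by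
    have hF : Measurable fun w : (B × C) × A => p w.2 w.1.1 w.1.2 :=
      hp.comp ((measurable_snd).prodMk ((measurable_fst.fst).prodMk measurable_fst.snd))
    exact hF.stronglyMeasurable.integral_prod_right'.measurable
  have hZm : Measurable fun c : C => ∫ a, ∫ b, p a b c ∂μB ∂μA := by
    have hF : Measurable fun w : C × A => ∫ b, p w.2 b w.1 ∂μB :=
      hXm.comp (measurable_snd.prodMk measurable_fst)
    exact hF.stronglyMeasurable.integral_prod_right'.measurable
  -- the integrand of condMI, jointly measurable
  set g : A → B → C → ℝ := fun a b c =>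
    p a b c * Real.log (p a b c * (∫ a', ∫ b', p a' b' c ∂μB ∂μA) /
        ((∫ b', p a b' c ∂μB) * (∫ a', p a' b c ∂μA))) with hgdef
  have hgm : Measurable fun w : A × B × C => g w.1 w.2.1 w.2.2 := by
    apply hp.mul
    apply Measurable.log
    apply Measurable.div
    · exact hp.mul (hZm.comp measurable_snd.snd)
    · exact (hXm.comp (measurable_fst.prodMk measurable_snd.snd)).mul
        (hYm.comp (measurable_snd.fst.prodMk measurable_snd.snd))
  -- bound on g
  have hgb : ∀ a b c, ‖g a b c‖ ≤ bu * (Real.log bu - Real.log al) := by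
    intro a b c
    rw [hgdef]
    simp only [← hkey a b c]
    rw [norm_mul, Real.norm_eq_abs, Real.norm_eq_abs]
    have h1 : |p a b c| ≤ bu := by
      rw [abs_of_pos (hppos a b c)]; exact (hbound a b c).2
    have h2 : |Real.log (p a b c / prodDensity μA μB p a b c)| ≤
        Real.log bu - Real.log al := by
      rw [Real.log_div (hppos a b c).ne' (hqpos a b c).ne', abs_le]
      constructor
      · have e1 : Real.log (p a b c) ≥ Real.log al :=
          Real.log_le_log hal (hbound a b c).1
        have e2 : Real.log (prodDensity μA μB p a b c) ≤ Real.log bu :=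
          Real.log_le_log (hqpos a b c) (hqbound a b c).2
        linarith
      · have e1 : Real.log (p a b c) ≤ Real.log bu :=
          Real.log_le_log (hppos a b c) (hbound a b c).2
        have e2 : Real.log (prodDensity μA μB p a b c) ≥ Real.log al :=
          Real.log_le_log hal (hqbound a b c).1
        linarith
    exact mul_le_mul h1 h2 (abs_nonneg _) hbu.le
  have hpb : ∀ a b c, ‖p a b c‖ ≤ bu := by
    intro a b c
    rw [Real.norm_eq_abs, abs_of_pos (hppos a b c)]; exact (hbound a b c).2
  -- integrability, level C
  have Igc : ∀ a b, Integrable (fun c => g a b c) μC := by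
    intro a b
    have m : Measurable fun c => g a b c :=
      hgm.comp (measurable_const.prodMk (measurable_const.prodMk measurable_id))
    exact (integrable_const (bu * (Real.log bu - Real.log al))).mono'
      m.aestronglyMeasurable (ae_of_all _ fun c => hgb a b c)
  have Ipc : ∀ a b, Integrable (fun c => p a b c) μC := by
    intro a b
    have m : Measurable fun c => p a b c :=
      hp.comp (measurable_const.prodMk (measurable_const.prodMk measurable_id))
    exact (integrable_const bu).mono' m.aestronglyMeasurable (ae_of_all _ fun c => hpb a b c)
  -- integrability, level B
  have Igb : ∀ a, Integrable (fun b => ∫ c, g a b c ∂μC) μB := by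
    intro a
    have m : StronglyMeasurable fun b : B => ∫ c, g a b c ∂μC := by
      have hF : Measurable fun w : B × C => g a w.1 w.2 :=
        hgm.comp (measurable_const.prodMk (measurable_fst.prodMk measurable_snd))
      exact hF.stronglyMeasurable.integral_prod_right'
    refine (integrable_const (bu * (Real.log bu - Real.log al) * (μC Set.univ).toReal)).mono'
      m.aestronglyMeasurable (ae_of_all _ fun b => ?_)
    exact norm_integral_le_of_norm_le_const (ae_of_all _ fun c => hgb a b c)
  have Ipb : ∀ a, Integrable (fun b => ∫ c, p a b c ∂μC) μB := by
    intro a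
    have m : StronglyMeasurable fun b : B => ∫ c, p a b c ∂μC := by
      have hF : Measurable fun w : B × C => p a w.1 w.2 :=
        hp.comp (measurable_const.prodMk (measurable_fst.prodMk measurable_snd))
      exact hF.stronglyMeasurable.integral_prod_right'
    refine (integrable_const (bu * (μC Set.univ).toReal)).mono'
      m.aestronglyMeasurable (ae_of_all _ fun b => ?_)
    exact norm_integral_le_of_norm_le_const (ae_of_all _ fun c => hpb a b c)
  -- integrability, level A
  have Iga : Integrable (fun a => ∫ b, ∫ c, g a b c ∂μC ∂μB) μA := by
    have m : StronglyMeasurable fun a : A => ∫ b, ∫ c, g a b c ∂μC ∂μB := by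
      have hF : Measurable fun w : A × B => ∫ c, g w.1 w.2 c ∂μC := by
        have hG : Measurable fun w : (A × B) × C => g w.1.1 w.1.2 w.2 :=
          hgm.comp (measurable_fst.fst.prodMk (measurable_fst.snd.prodMk measurable_snd))
        exact hG.stronglyMeasurable.integral_prod_right'.measurable
      exact hF.stronglyMeasurable.integral_prod_right'
    refine (integrable_const (bu * (Real.log bu - Real.log al) * (μC Set.univ).toReal *
      (μB Set.univ).toReal)).mono' m.aestronglyMeasurable (ae_of_all _ fun a => ?_)
    refine norm_integral_le_of_norm_le_const (ae_of_all _ fun b => ?_)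
    exact norm_integral_le_of_norm_le_const (ae_of_all _ fun c => hgb a b c)
  have Ipa : Integrable (fun a => ∫ b, ∫ c, p a b c ∂μC ∂μB) μA := by
    have m : StronglyMeasurable fun a : A => ∫ b, ∫ c, p a b c ∂μC ∂μB := by
      have hF : Measurable fun w : A × B => ∫ c, p w.1 w.2 c ∂μC := by
        have hG : Measurable fun w : (A × B) × C => p w.1.1 w.1.2 w.2 :=
          hp.comp (measurable_fst.fst.prodMk (measurable_fst.snd.prodMk measurable_snd))
        exact hG.stronglyMeasurable.integral_prod_right'.measurable
      exact hF.stronglyMeasurable.integral_prod_right'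
    refine (integrable_const (bu * (μC Set.univ).toReal * (μB Set.univ).toReal)).mono'
      m.aestronglyMeasurable (ae_of_all _ fun a => ?_)
    refine norm_integral_le_of_norm_le_const (ae_of_all _ fun b => ?_)
    exact norm_integral_le_of_norm_le_const (ae_of_all _ fun c => hpb a b c)
  -- the first integral equals condMI + 1
  have E1 : (∫ a, ∫ b, ∫ c,
      p a b c * (1 + Real.log (p a b c / prodDensity μA μB p a b c)) ∂μC ∂μB ∂μA)
      = condMI μA μB μC p + 1 := by
    have step1 : ∀ a b, (∫ c, p a b c * (1 + Real.log (p a b c / prodDensity μA μB p a b c)) ∂μC)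
        = (∫ c, g a b c ∂μC) + ∫ c, p a b c ∂μC := by
      intro a b
      rw [← integral_add (Igc a b) (Ipc a b)]
      exact integral_congr_ae (ae_of_all _ fun c => hsplit a b c)
    have step2 : ∀ a, (∫ b, (∫ c, g a b c ∂μC) + (∫ c, p a b c ∂μC) ∂μB)
        = (∫ b, ∫ c, g a b c ∂μC ∂μB) + ∫ b, ∫ c, p a b c ∂μC ∂μB := by
      intro a
      exact integral_add (Igb a) (Ipb a)
    simp_rw [step1, step2]
    rw [integral_add Iga Ipa, hp1, condMI]
  rw [E1, E2, ← Real.exp_add]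
  norm_num
end

section
/- (McDiarmid concentration for the isolated k-NN inner average) Let g : X³ → ℝ satisfy g_min ≤ g ≤ g_max with c = g_max − g_min, and let φ(w₁,…,wₙ) = (1/m) Σ_{i=1}^{m} (1/k) Σ_{j ∈ A^m(z_i)} g(x_j, y_i, z_i), where wᵢ = (xᵢ,yᵢ,zᵢ), A^m(z_i) are the indices of the k nearest neighbors (in Euclidean distance on z) of z_i among {z_{m+1},…,z_n}, and m ≥ k. Then changing any single coordinate wᵢ changes the value of φ by at most c/k, i.e., φ has bounded differences with constant c/k in each coordinate. -/
open Finset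

/-- `isKNN d n m k z i A` says that `A` is the set of indices of the `k` nearest
neighbors of `z i` (in Euclidean distance) among the points `z j` with index
`j ∈ {m, …, n−1}` (the non-isolated points), with ties broken by the fixed rule
"smaller index wins". -/
def isKNN (d n m k : ℕ) (z : Fin n → EuclideanSpace ℝ (Fin d)) (i : Fin n)
    (A : Finset (Fin n)) : Prop :=
  (∀ j ∈ A, m ≤ (j : ℕ)) ∧ A.card = k ∧
    ∀ j ∈ A, ∀ j' : Fin n, m ≤ (j' : ℕ) → j' ∉ A →
      dist (z j) (z i) < dist (z j') (z i) ∨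
        (dist (z j) (z i) = dist (z j') (z i) ∧ (j : ℕ) < (j' : ℕ))

/-- The isolated `k`-NN sample average
`φ(w₁,…,wₙ) = (1/m) Σ_{i<m} (1/k) Σ_{j ∈ A i} g(x_j, y_i, z_i)`,
where `wᵢ = (xᵢ, yᵢ, zᵢ)` and `A i` is the `k`-NN index set of query `i`. -/
noncomputable def phiKNN (d n m k : ℕ)
    (g : EuclideanSpace ℝ (Fin d) → EuclideanSpace ℝ (Fin d) →
      EuclideanSpace ℝ (Fin d) → ℝ)
    (w : Fin n → EuclideanSpace ℝ (Fin d) × EuclideanSpace ℝ (Fin d) ×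
      EuclideanSpace ℝ (Fin d))
    (A : Fin n → Finset (Fin n)) : ℝ :=
  (1 / (m : ℝ)) * ∑ i ∈ Finset.univ.filter (fun i : Fin n => (i : ℕ) < m),
    (1 / (k : ℝ)) * ∑ j ∈ A i, g (w j).1 (w i).2.1 (w i).2.2

/-- If `A` is a `k`-NN set for `z` at query `i`, `A'` is a `k`-NN set for `z'` at the
same query, and `z`, `z'` agree at the query and at all data indices except possibly `i₀`,
then for `j ∈ A \ A'` and `j' ∈ A' \ A`, one of `j`, `j'` must be `i₀`. -/
lemma knn_cross {d n m k : ℕ} {z z' : Fin n → EuclideanSpace ℝ (Fin d)} {i : Fin n}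
    {A A' : Finset (Fin n)} (hA : isKNN d n m k z i A) (hA' : isKNN d n m k z' i A')
    (i₀ : Fin n) (hz : ∀ j : Fin n, m ≤ (j : ℕ) → j ≠ i₀ → z j = z' j)
    (hzi : z i = z' i) :
    ∀ j ∈ A \ A', ∀ j' ∈ A' \ A, j = i₀ ∨ j' = i₀ := by
  intro j hj j' hj'
  by_contra hcon
  push_neg at hcon
  obtain ⟨hji, hj'i⟩ := hcon
  rw [Finset.mem_sdiff] at hj hj'
  have hjm : m ≤ (j : ℕ) := hA.1 j hj.1
  have hj'm : m ≤ (j' : ℕ) := hA'.1 j' hj'.1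
  have e1 := hA.2.2 j hj.1 j' hj'm hj'.2
  have e2 := hA'.2.2 j' hj'.1 j hjm hj.2
  rw [hz j hjm hji, hz j' hj'm hj'i, hzi] at e1
  rcases e1 with h1 | ⟨h1, h1'⟩ <;> rcases e2 with h2 | ⟨h2, h2'⟩ <;>
    first | linarith | omega

/-- Under the same hypotheses, either `A = A'` or they differ in exactly one element
each, one of which is `i₀`. -/
lemma knn_diff {d n m k : ℕ} {z z' : Fin n → EuclideanSpace ℝ (Fin d)} {i : Fin n}
    {A A' : Finset (Fin n)} (hA : isKNN d n m k z i A) (hA' : isKNN d n m k z' i A')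
    (i₀ : Fin n) (hz : ∀ j : Fin n, m ≤ (j : ℕ) → j ≠ i₀ → z j = z' j)
    (hzi : z i = z' i) :
    A = A' ∨ ∃ j j', A \ A' = {j} ∧ A' \ A = {j'} ∧ (j = i₀ ∨ j' = i₀) := by
  by_cases hAA : A = A'
  · exact Or.inl hAA
  right
  have hcard : (A \ A').card = (A' \ A).card :=
    Finset.card_sdiff_comm (hA.2.1.trans hA'.2.1.symm)
  have hne : (A \ A').Nonempty := by
    rw [Finset.sdiff_nonempty]
    intro hsub
    exact hAA (Finset.eq_of_subset_of_card_le hsub (le_of_eq (hA'.2.1.trans hA.2.1.symm)))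
  have hle : (A \ A').card ≤ 1 := by
    by_contra hgt
    push_neg at hgt
    obtain ⟨j, hj, hji⟩ := Finset.exists_mem_ne hgt i₀
    obtain ⟨j', hj', hj'i⟩ :=
      Finset.exists_mem_ne (lt_of_lt_of_eq hgt hcard) i₀
    rcases knn_cross hA hA' i₀ hz hzi j hj j' hj' with h | h
    · exact hji h
    · exact hj'i h
  have h1 : (A \ A').card = 1 := le_antisymm hle (Finset.one_le_card.mpr hne)
  obtain ⟨j, hj⟩ := Finset.card_eq_one.mp h1
  obtain ⟨j', hj'⟩ := Finset.card_eq_one.mp (hcard.symm.trans h1)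
  exact ⟨j, j', hj, hj',
    knn_cross hA hA' i₀ hz hzi j (hj ▸ Finset.mem_singleton_self j)
      j' (hj' ▸ Finset.mem_singleton_self j')⟩

/-- Bound on the difference of two sums over sets that differ in at most one element
(involving `i₀`), of functions that agree away from `i₀` and take values in
`[gmin, gmax]`. -/
lemma knn_sum_bound {n k : ℕ} {A A' : Finset (Fin n)} (hAc : A.card = k) (hA'c : A'.card = k)
    {f f' : Fin n → ℝ} {gmin gmax : ℝ}
    (hf : ∀ j, gmin ≤ f j ∧ f j ≤ gmax) (hf' : ∀ j, gmin ≤ f' j ∧ f' j ≤ gmax)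
    (i₀ : Fin n) (hff : ∀ j, j ≠ i₀ → f j = f' j)
    (hAA : A = A' ∨ ∃ j j', A \ A' = {j} ∧ A' \ A = {j'} ∧ (j = i₀ ∨ j' = i₀)) :
    |∑ j ∈ A, f j - ∑ j ∈ A', f' j| ≤ gmax - gmin := by
  have hmm : gmin ≤ gmax := le_trans (hf i₀).1 (hf i₀).2
  rcases hAA with rfl | ⟨j, j', hj, hj', hone⟩
  · rw [← Finset.sum_sub_distrib]
    by_cases hi₀ : i₀ ∈ A
    · rw [Finset.sum_eq_single_of_mem i₀ hi₀
        (fun b _ hb => by rw [hff b hb, sub_self])]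
      rw [abs_sub_le_iff]
      exact ⟨by linarith [(hf i₀).2, (hf' i₀).1], by linarith [(hf i₀).1, (hf' i₀).2]⟩
    · rw [Finset.sum_eq_zero (fun b hb => by
        rw [hff b (fun h => hi₀ (h ▸ hb)), sub_self]), abs_zero]
      linarith
  · have hjA : j ∈ A ∧ j ∉ A' := by
      have := hj ▸ Finset.mem_singleton_self j
      rw [Finset.mem_sdiff] at this; exact this
    have hj'A : j' ∈ A' ∧ j' ∉ A := by
      have := hj' ▸ Finset.mem_singleton_self j'
      rw [Finset.mem_sdiff] at this; exact this
    have hi₀int : i₀ ∉ A ∩ A' := by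
      rcases hone with rfl | rfl
      · intro h; exact hjA.2 (Finset.mem_inter.mp h).2
      · intro h; exact hj'A.2 (Finset.mem_inter.mp h).1
    have hsumA : ∑ i ∈ A, f i = ∑ i ∈ A ∩ A', f i + f j := by
      rw [← Finset.sum_inter_add_sum_sdiff A A' f, hj, Finset.sum_singleton]
    have hsumA' : ∑ i ∈ A', f' i = ∑ i ∈ A ∩ A', f' i + f' j' := by
      rw [← Finset.sum_inter_add_sum_sdiff A' A f', hj', Finset.sum_singleton,
        Finset.inter_comm]
    have hint : ∑ i ∈ A ∩ A', f i = ∑ i ∈ A ∩ A', f' i :=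
      Finset.sum_congr rfl (fun b hb => hff b (fun h => hi₀int (h ▸ hb)))
    rw [hsumA, hsumA', hint]
    have : ∑ i ∈ A ∩ A', f' i + f j - (∑ i ∈ A ∩ A', f' i + f' j') = f j - f' j' := by ring
    rw [this, abs_sub_le_iff]
    exact ⟨by linarith [(hf j).2, (hf' j').1], by linarith [(hf j).1, (hf' j').2]⟩

/-- Bounded-differences property of the isolated `k`-NN sample average:
if `g_min ≤ g ≤ g_max` with `c = g_max − g_min` and `k ≤ m`, then changing a single
coordinate `w i₀` of the dataset changes `φ` by at most `c / k`. -/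
theorem knn_bounded_differences (d n m k : ℕ) (hk : 0 < k) (hkm : k ≤ m) (hmn : m ≤ n)
    (g : EuclideanSpace ℝ (Fin d) → EuclideanSpace ℝ (Fin d) →
      EuclideanSpace ℝ (Fin d) → ℝ)
    (gmin gmax : ℝ) (hg : ∀ x y z, g x y z ∈ Set.Icc gmin gmax)
    (w w' : Fin n → EuclideanSpace ℝ (Fin d) × EuclideanSpace ℝ (Fin d) ×
      EuclideanSpace ℝ (Fin d))
    (i₀ : Fin n) (hdiff : ∀ j : Fin n, j ≠ i₀ → w j = w' j)
    (A A' : Fin n → Finset (Fin n))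
    (hA : ∀ i : Fin n, (i : ℕ) < m → isKNN d n m k (fun j => (w j).2.2) i (A i))
    (hA' : ∀ i : Fin n, (i : ℕ) < m → isKNN d n m k (fun j => (w' j).2.2) i (A' i)) :
    |phiKNN d n m k g w A - phiKNN d n m k g w' A'| ≤ (gmax - gmin) / k := by
  have hgm : gmin ≤ gmax := le_trans (hg 0 0 0).1 (hg 0 0 0).2
  have hm : 0 < m := lt_of_lt_of_le hk hkm
  have hmR : (0:ℝ) < m := by exact_mod_cast hm
  have hkR : (0:ℝ) < k := by exact_mod_cast hk
  set Q := Finset.univ.filter (fun i : Fin n => (i : ℕ) < m) with hQ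
  have hQmem : ∀ i : Fin n, i ∈ Q ↔ (i : ℕ) < m := by
    intro i; simp [hQ]
  have hQcard : Q.card = m := by
    rw [show Q = (Finset.range m).attachFin
        (fun x hx => lt_of_lt_of_le (Finset.mem_range.mp hx) hmn) from
      Finset.ext fun i => by simp [hQ, Finset.mem_attachFin]]
    rw [Finset.card_attachFin, Finset.card_range]
  set F : Fin n → ℝ := fun i => (1 / (k : ℝ)) * ∑ j ∈ A i, g (w j).1 (w i).2.1 (w i).2.2
    with hF
  set F' : Fin n → ℝ := fun i => (1 / (k : ℝ)) * ∑ j ∈ A' i, g (w' j).1 (w' i).2.1 (w' i).2.2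
    with hF'
  have hphi : phiKNN d n m k g w A - phiKNN d n m k g w' A'
      = (1 / (m : ℝ)) * ∑ i ∈ Q, (F i - F' i) := by
    rw [phiKNN, phiKNN, Finset.sum_sub_distrib, mul_sub]
  -- the z-agreement hypothesis for knn_diff
  have hz : ∀ j : Fin n, m ≤ (j : ℕ) → j ≠ i₀ →
      (fun j => (w j).2.2) j = (fun j => (w' j).2.2) j := by
    intro j _ hji; simp only; rw [hdiff j hji]
  rcases lt_or_ge (i₀ : ℕ) m with hi₀ | hi₀
  · -- Case 1: the changed point is a query point
    have hzero : ∀ i ∈ Q, i ≠ i₀ → F i - F' i = 0 := by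
      intro i hi hii₀
      have him : (i : ℕ) < m := (hQmem i).mp hi
      have hwi : w i = w' i := hdiff i hii₀
      have hzi : (fun j => (w j).2.2) i = (fun j => (w' j).2.2) i := by
        simp only; rw [hwi]
      have hAi : A i = A' i := by
        rcases knn_diff (hA i him) (hA' i him) i₀ hz hzi with h | ⟨j, j', hj, _, hone⟩
        · exact h
        · exfalso
          have hjm : m ≤ (j : ℕ) := (hA i him).1 j
            (Finset.mem_sdiff.mp (hj ▸ Finset.mem_singleton_self j)).1
          have hj'm : m ≤ (j' : ℕ) := by
            rcases hone with rfl | rfl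
            · omega
            · exact (hA' i him).1 j'
                (Finset.mem_sdiff.mp (‹A' i \ A i = {j'}› ▸ Finset.mem_singleton_self j')).1
          rcases hone with rfl | rfl <;> omega
      rw [hF, hF']
      simp only
      rw [hAi, hwi]
      have hsum : ∑ j ∈ A' i, g (w j).1 (w' i).2.1 (w' i).2.2
          = ∑ j ∈ A' i, g (w' j).1 (w' i).2.1 (w' i).2.2 :=
        Finset.sum_congr rfl (fun b hb => by
          have hbm : m ≤ (b : ℕ) := (hA' i him).1 b hb
          rw [hdiff b (fun h => (by omega : ¬ m ≤ (i₀ : ℕ)) (h ▸ hbm))])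
      rw [hsum, sub_self]
    have hi₀Q : i₀ ∈ Q := (hQmem i₀).mpr hi₀
    have hsum : ∑ i ∈ Q, (F i - F' i) = F i₀ - F' i₀ :=
      Finset.sum_eq_single_of_mem i₀ hi₀Q hzero
    rw [hphi, hsum, abs_mul, abs_of_pos (by positivity : (0:ℝ) < 1 / (m:ℝ))]
    -- bound |F i₀ - F' i₀| ≤ gmax - gmin
    have hSbound : ∀ (B : Finset (Fin n)) (x : Fin n →
        EuclideanSpace ℝ (Fin d) × EuclideanSpace ℝ (Fin d) × EuclideanSpace ℝ (Fin d))
        (hB : B.card = k),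
        (k : ℝ) * gmin ≤ ∑ j ∈ B, g (x j).1 (x i₀).2.1 (x i₀).2.2 ∧
        ∑ j ∈ B, g (x j).1 (x i₀).2.1 (x i₀).2.2 ≤ (k : ℝ) * gmax := by
      intro B x hB
      constructor
      · calc (k : ℝ) * gmin = ∑ _j ∈ B, gmin := by
              rw [Finset.sum_const, hB, nsmul_eq_mul]
          _ ≤ _ := Finset.sum_le_sum (fun j _ => (hg _ _ _).1)
      · calc ∑ j ∈ B, g (x j).1 (x i₀).2.1 (x i₀).2.2
            ≤ ∑ _j ∈ B, gmax := Finset.sum_le_sum (fun j _ => (hg _ _ _).2)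
          _ = (k : ℝ) * gmax := by rw [Finset.sum_const, hB, nsmul_eq_mul]
    have h1 := hSbound (A i₀) w (hA i₀ hi₀).2.1
    have h2 := hSbound (A' i₀) w' (hA' i₀ hi₀).2.1
    have hFb : |F i₀ - F' i₀| ≤ gmax - gmin := by
      rw [hF, hF']
      simp only
      rw [← mul_sub, abs_mul, abs_of_pos (by positivity : (0:ℝ) < 1 / (k:ℝ))]
      rw [div_mul_eq_mul_div, one_mul, div_le_iff₀ hkR]
      rw [abs_sub_le_iff]
      constructor <;> nlinarith [h1.1, h1.2, h2.1, h2.2]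
    calc (1 / (m:ℝ)) * |F i₀ - F' i₀| ≤ (1 / (m:ℝ)) * (gmax - gmin) := by
          apply mul_le_mul_of_nonneg_left hFb (by positivity)
      _ ≤ (gmax - gmin) / k := by
          rw [div_mul_eq_mul_div, one_mul]
          apply div_le_div_of_nonneg_left (by linarith) hkR (by exact_mod_cast hkm)
  · -- Case 2: the changed point is a data point
    have hterm : ∀ i ∈ Q, |F i - F' i| ≤ (gmax - gmin) / k := by
      intro i hi
      have him : (i : ℕ) < m := (hQmem i).mp hi
      have hii₀ : i ≠ i₀ := fun h => by omega
      have hwi : w i = w' i := hdiff i hii₀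
      have hzi : (fun j => (w j).2.2) i = (fun j => (w' j).2.2) i := by
        simp only; rw [hwi]
      have hdisj := knn_diff (hA i him) (hA' i him) i₀ hz hzi
      have hsb := knn_sum_bound (hA i him).2.1 (hA' i him).2.1
        (f := fun j => g (w j).1 (w i).2.1 (w i).2.2)
        (f' := fun j => g (w' j).1 (w' i).2.1 (w' i).2.2)
        (fun j => ⟨(hg _ _ _).1, (hg _ _ _).2⟩)
        (fun j => ⟨(hg _ _ _).1, (hg _ _ _).2⟩)
        i₀ (fun j hj => by show g (w j).1 (w i).2.1 (w i).2.2 = g (w' j).1 (w' i).2.1 (w' i).2.2; rw [hdiff j hj, hwi]) hdisj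
      rw [hF, hF']
      simp only
      rw [← mul_sub, abs_mul, abs_of_pos (by positivity : (0:ℝ) < 1 / (k:ℝ))]
      rw [div_mul_eq_mul_div, one_mul, div_le_div_iff₀ hkR hkR]
      nlinarith [hsb, hkR]
    calc |phiKNN d n m k g w A - phiKNN d n m k g w' A'|
        = (1 / (m:ℝ)) * |∑ i ∈ Q, (F i - F' i)| := by
          rw [hphi, abs_mul, abs_of_pos (by positivity : (0:ℝ) < 1 / (m:ℝ))]
      _ ≤ (1 / (m:ℝ)) * ∑ i ∈ Q, |F i - F' i| := by
          apply mul_le_mul_of_nonneg_left (Finset.abs_sum_le_sum_abs _ _) (by positivity)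
      _ ≤ (1 / (m:ℝ)) * ∑ _i ∈ Q, (gmax - gmin) / k := by
          apply mul_le_mul_of_nonneg_left (Finset.sum_le_sum hterm) (by positivity)
      _ = (gmax - gmin) / k := by
          rw [Finset.sum_const, hQcard, nsmul_eq_mul]
          field_simp
end

section
/- (McDiarmid's inequality) Let V₁,…,Vₙ be independent random variables with values in a set V, and let φ : Vⁿ → ℝ satisfy the bounded-difference condition: for each i, sup |φ(v₁,…,vₙ) − φ(v₁,…,v'ᵢ,…,vₙ)| ≤ cᵢ. Then for any ε > 0, P( |φ(Vⁿ) − E[φ(Vⁿ)]| ≥ ε ) ≤ 2 exp( −2ε² / Σᵢ cᵢ² ). -/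
open MeasureTheory ProbabilityTheory Real

lemma integrable_of_abs_le {α : Type*} [MeasurableSpace α] {ν : Measure α} [IsFiniteMeasure ν]
    {f : α → ℝ} (hf : Measurable f) {C : ℝ} (h : ∀ x, |f x| ≤ C) : Integrable f ν :=
  ⟨hf.aestronglyMeasurable, MeasureTheory.HasFiniteIntegral.of_bounded (C := C) (ae_of_all _ h)⟩



lemma mcd_dpos {p : ℝ} (hp0 : 0 ≤ p) (hp1 : p ≤ 1) (h : ℝ) :
    0 < 1 - p + p * Real.exp h := by
  rcases eq_or_lt_of_le hp1 with h1 | h1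
  · subst h1; simpa using Real.exp_pos h
  · have := mul_nonneg hp0 (Real.exp_pos h).le
    linarith

lemma mcd_core {p : ℝ} (hp0 : 0 ≤ p) (hp1 : p ≤ 1) (h : ℝ) :
    -(p * h) + Real.log (1 - p + p * Real.exp h) ≤ h ^ 2 / 8 := by
  set d : ℝ → ℝ := fun x => 1 - p + p * Real.exp x with hd
  have hdpos : ∀ x, 0 < d x := fun x => mcd_dpos hp0 hp1 x
  set f : ℝ → ℝ := fun x => x ^ 2 / 8 + p * x - Real.log (d x) with hf
  set f' : ℝ → ℝ := fun x => x / 4 + p - p * Real.exp x / d x with hf'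
  have hdd : ∀ x, HasDerivAt d (p * Real.exp x) x := fun x =>
    (((Real.hasDerivAt_exp x).const_mul p).const_add (1 - p))
  have hfd : ∀ x, HasDerivAt f (f' x) x := by
    intro x
    have h1 : HasDerivAt (fun y : ℝ => y ^ 2 / 8) (x / 4) x := by
      have := (hasDerivAt_pow 2 x).div_const 8
      exact this.congr_deriv (by ring)
    have h2 : HasDerivAt (fun y : ℝ => p * y) p x := by
      simpa using (hasDerivAt_id x).const_mul p
    have h3 : HasDerivAt (fun y => Real.log (d y)) (p * Real.exp x / d x) x :=
      (hdd x).log (hdpos x).ne'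
    exact (h1.add h2).sub h3
  have hf'd : ∀ x, HasDerivAt f'
      (1 / 4 - (p * Real.exp x * d x - p * Real.exp x * (p * Real.exp x)) / (d x) ^ 2) x := by
    intro x
    have h1 : HasDerivAt (fun y : ℝ => y / 4 + p) (1 / 4) x := by
      simpa using ((hasDerivAt_id x).div_const 4).add_const p
    have h2 : HasDerivAt (fun y => p * Real.exp y / d y)
        ((p * Real.exp x * d x - p * Real.exp x * (p * Real.exp x)) / (d x) ^ 2) x :=
      ((Real.hasDerivAt_exp x).const_mul p).div (hdd x) (hdpos x).ne'
    exact h1.sub h2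
  have hf''nonneg : ∀ x, 0 ≤ 1 / 4 -
      (p * Real.exp x * d x - p * Real.exp x * (p * Real.exp x)) / (d x) ^ 2 := by
    intro x
    have hdx := hdpos x
    rw [sub_nonneg, div_le_iff₀ (by positivity)]
    have hu : 0 ≤ p * Real.exp x := mul_nonneg hp0 (Real.exp_pos x).le
    have hw : 0 ≤ 1 - p := by linarith
    have hdval : d x = (1 - p) + p * Real.exp x := rfl
    nlinarith [sq_nonneg ((1 - p) - p * Real.exp x)]
  have hf'mono : Monotone f' :=
    monotone_of_deriv_nonneg (fun x => (hf'd x).differentiableAt)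
      (fun x => by rw [(hf'd x).deriv]; exact hf''nonneg x)
  have hf'0 : f' 0 = 0 := by
    simp [hf', hd]
  have hf0 : f 0 = 0 := by
    simp [hf, hd]
  have key : 0 ≤ f h := by
    rcases le_total 0 h with hh | hh
    · have hmono : MonotoneOn f (Set.Ici 0) := by
        apply monotoneOn_of_deriv_nonneg (convex_Ici 0)
          (Continuous.continuousOn (by
            exact continuous_iff_continuousAt.2 fun x => (hfd x).continuousAt))
          (fun x _ => (hfd x).differentiableAt.differentiableWithinAt)
        intro x hx
        rw [(hfd x).deriv]
        rw [interior_Ici] at hx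
        have := hf'mono (le_of_lt hx)
        rw [hf'0] at this
        exact this
      have := hmono (Set.self_mem_Ici) hh hh
      rwa [hf0] at this
    · have hmono : AntitoneOn f (Set.Iic 0) := by
        apply antitoneOn_of_deriv_nonpos (convex_Iic 0)
          (Continuous.continuousOn (by
            exact continuous_iff_continuousAt.2 fun x => (hfd x).continuousAt))
          (fun x _ => (hfd x).differentiableAt.differentiableWithinAt)
        intro x hx
        rw [(hfd x).deriv]
        rw [interior_Iic] at hx
        have := hf'mono (le_of_lt hx)
        rw [hf'0] at this
        exact this
      have := hmono hh (Set.self_mem_Iic) hh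
      rwa [hf0] at this
    
  have : Real.log (d h) ≤ h ^ 2 / 8 + p * h := by
    simp only [hf] at key; linarith
  linarith

lemma hoeffding_lemma {α : Type*} [MeasurableSpace α] (ν : Measure α) [IsProbabilityMeasure ν]
    {X : α → ℝ} (hX : Measurable X) {a b : ℝ} (hab : ∀ x, X x ∈ Set.Icc a b)
    (h0 : ∫ x, X x ∂ν = 0) (t : ℝ) :
    ∫ x, Real.exp (t * X x) ∂ν ≤ Real.exp (t ^ 2 * (b - a) ^ 2 / 8) := by
  have hne : Nonempty α := by
    by_contra hemp
    have : ν Set.univ = 0 := by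
      rw [Set.univ_eq_empty_iff.2 (not_nonempty_iff.1 hemp)]; simp
    simp [measure_univ] at this
  obtain ⟨x₀⟩ := hne
  have hab' : a ≤ b := le_trans (hab x₀).1 (hab x₀).2
  -- integrability of X
  have hXint : Integrable X ν := by
    apply integrable_of_abs_le hX (C := |a| + |b|)
    intro x
    have h1 := (hab x).1; have h2 := (hab x).2
    have := neg_abs_le a; have := le_abs_self b
    rw [abs_le]; constructor <;> [linarith [abs_nonneg b]; linarith [abs_nonneg a]]
  have hexpint : Integrable (fun x => Real.exp (t * X x)) ν := by
    apply integrable_of_abs_le ((hX.const_mul t).exp)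
      (C := Real.exp (|t| * (|a| + |b|)))
    intro x
    rw [Real.abs_exp]
    apply Real.exp_le_exp.2
    calc t * X x ≤ |t * X x| := le_abs_self _
      _ = |t| * |X x| := abs_mul _ _
      _ ≤ |t| * (|a| + |b|) := by
          apply mul_le_mul_of_nonneg_left _ (abs_nonneg t)
          have h1 := (hab x).1; have h2 := (hab x).2
          have := neg_abs_le a; have := le_abs_self b
          rw [abs_le]; constructor <;> [linarith [abs_nonneg b]; linarith [abs_nonneg a]]
  have ha0 : a ≤ 0 := by
    have : ∫ _, a ∂ν ≤ ∫ x, X x ∂ν := integral_mono (integrable_const a) hXint fun x => (hab x).1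
    simpa [h0, measure_univ] using this
  have hb0 : 0 ≤ b := by
    have : ∫ x, X x ∂ν ≤ ∫ _, b ∂ν := integral_mono hXint (integrable_const b) fun x => (hab x).2
    simpa [h0, measure_univ] using this
  rcases eq_or_lt_of_le hab' with heq | hlt
  · -- a = b forces X = 0
    subst heq
    have hX0 : ∀ x, X x = a := fun x => le_antisymm (hab x).2 (hab x).1
    have : a = 0 := le_antisymm ha0 hb0
    subst this
    simp only [hX0, mul_zero, Real.exp_zero]
    rw [integral_const]
    simp [measure_univ]
  · -- main case a < b
    have hba : 0 < b - a := sub_pos.2 hlt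
    set p : ℝ := -a / (b - a) with hp
    have hp0 : 0 ≤ p := div_nonneg (by linarith) hba.le
    have hp1 : p ≤ 1 := by
      rw [div_le_one hba]; linarith
    set h : ℝ := t * (b - a) with hh
    set K2 : ℝ := (Real.exp (t * b) - Real.exp (t * a)) / (b - a) with hK2
    set K1 : ℝ := (b * Real.exp (t * a) - a * Real.exp (t * b)) / (b - a) with hK1
    -- pointwise convexity bound: exp (t * X x) ≤ K1 + K2 * X x
    have hpt : ∀ x, Real.exp (t * X x) ≤ K1 + K2 * X x := by
      intro x
      have h1 := (hab x).1; have h2 := (hab x).2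
      have hθ1 : (0:ℝ) ≤ (b - X x) / (b - a) := div_nonneg (by linarith) hba.le
      have hθ2 : (0:ℝ) ≤ (X x - a) / (b - a) := div_nonneg (by linarith) hba.le
      have hθs : (b - X x) / (b - a) + (X x - a) / (b - a) = 1 := by field_simp; ring
      have key := convexOn_exp.2 (Set.mem_univ (t * a)) (Set.mem_univ (t * b)) hθ1 hθ2 hθs
      have harg : ((b - X x) / (b - a)) • (t * a) + ((X x - a) / (b - a)) • (t * b)
          = t * X x := by
        simp only [smul_eq_mul]; field_simp; ring
      rw [harg] at key
      calc Real.exp (t * X x) ≤ ((b - X x) / (b - a)) • Real.exp (t * a)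
            + ((X x - a) / (b - a)) • Real.exp (t * b) := key
        _ = K1 + K2 * X x := by
            simp only [smul_eq_mul]
            rw [hK1, hK2]
            field_simp
            ring
    -- integrate
    have hint : ∫ x, Real.exp (t * X x) ∂ν ≤ K1 := by
      have hrhsint : Integrable (fun x => K1 + K2 * X x) ν :=
        (integrable_const K1).add (hXint.const_mul K2)
      have := integral_mono hexpint hrhsint hpt
      rwa [integral_add (integrable_const K1) (hXint.const_mul K2), integral_const,
        integral_const_mul, h0, mul_zero, add_zero, probReal_univ,
        smul_eq_mul, one_mul] at this
    -- bound K1 via mcd_core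
    have hK1pos : 0 < 1 - p + p * Real.exp h := mcd_dpos hp0 hp1 h
    have hK1eq : K1 = Real.exp (-(p * h)) * (1 - p + p * Real.exp h) := by
      have hph : -(p * h) = t * a := by rw [hp, hh]; field_simp
      have hexp : Real.exp (t * b) = Real.exp (t * a) * Real.exp h := by
        rw [← Real.exp_add, hh]; ring_nf
      rw [hph, hK1, hp, hexp]
      field_simp
      ring
    have hcore := mcd_core hp0 hp1 h
    have : K1 ≤ Real.exp (h ^ 2 / 8) := by
      rw [hK1eq, ← Real.exp_log hK1pos, ← Real.exp_add]
      exact Real.exp_le_exp.2 hcore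
    have hfin : h ^ 2 / 8 = t ^ 2 * (b - a) ^ 2 / 8 := by rw [hh]; ring
    rw [hfin] at this
    linarith

lemma nonempty_of_prob {α : Type*} [MeasurableSpace α] (ν : Measure α)
    [IsProbabilityMeasure ν] : Nonempty α := by
  by_contra hemp
  have : ν Set.univ = 0 := by
    rw [Set.univ_eq_empty_iff.2 (not_nonempty_iff.1 hemp)]; simp
  simp [measure_univ] at this

lemma abs_integral_le_of_abs_le {α : Type*} [MeasurableSpace α] {ν : Measure α}
    [IsProbabilityMeasure ν] {f : α → ℝ} {C : ℝ} (hf : AEStronglyMeasurable f ν)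
    (h : ∀ x, |f x| ≤ C) : |∫ x, f x ∂ν| ≤ C := by
  have := norm_integral_le_of_norm_le_const (μ := ν) (f := f) (C := C) (ae_of_all _ h)
  simpa [measure_univ] using this

set_option maxHeartbeats 1600000 in
lemma mcd_mgf {𝒱 : Type*} [MeasurableSpace 𝒱] (n : ℕ) :
    ∀ (ν : Fin n → Measure 𝒱), (∀ i, IsProbabilityMeasure (ν i)) →
    ∀ (φ : (Fin n → 𝒱) → ℝ), Measurable φ →
    ∀ M : ℝ, (∀ v, |φ v| ≤ M) →
    ∀ c : Fin n → ℝ,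
      (∀ (i : Fin n) (v v' : Fin n → 𝒱), (∀ j, j ≠ i → v j = v' j) → |φ v - φ v'| ≤ c i) →
    ∀ t : ℝ,
      ∫ v, Real.exp (t * (φ v - ∫ v', φ v' ∂Measure.pi ν)) ∂Measure.pi ν
        ≤ Real.exp (t ^ 2 * (∑ i, c i ^ 2) / 8) := by
  induction n with
  | zero =>
      intro ν hν φ hφ M hM c hc t
      haveI := hν
      have hconst : ∀ v : Fin 0 → 𝒱, φ v = φ (fun i => i.elim0) := fun v =>
        congrArg φ (funext fun i => i.elim0)
      have h1 : (∫ v', φ v' ∂Measure.pi ν) = φ (fun i => i.elim0) := by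
        simp only [hconst]
        rw [integral_const]; simp [measure_univ]
      simp only [hconst, h1, sub_self, mul_zero, Real.exp_zero]
      rw [integral_const]; simp [measure_univ]
  | succ n ih =>
      intro ν hν φ hφ M hM c hc t
      haveI := hν
      haveI : ∀ j : Fin n, IsProbabilityMeasure (ν j.succ) := fun j => hν _
      set π' : Measure (Fin n → 𝒱) := Measure.pi (fun j => ν j.succ) with hπ'
      set m : ℝ := ∫ v, φ v ∂Measure.pi ν with hm
      set e := MeasurableEquiv.piFinSuccAbove (fun _ : Fin (n+1) => 𝒱) 0 with he
      have hrest : (fun j : Fin n => ν ((0 : Fin (n+1)).succAbove j)) = fun j => ν j.succ := by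
        funext j; rw [Fin.succAbove_zero]
      have hMP : MeasurePreserving e (Measure.pi ν) ((ν 0).prod π') := by
        have h := measurePreserving_piFinSuccAbove ν 0
        rwa [hrest] at h
      have hesymm : ∀ (x : 𝒱) (w : Fin n → 𝒱), e.symm (x, w) = Fin.cons x w := by
        intro x w
        ext j
        refine Fin.cases ?_ (fun l => ?_) j
        · simp [he, MeasurableEquiv.piFinSuccAbove, Fin.insertNthEquiv]
        · simp [he, MeasurableEquiv.piFinSuccAbove, Fin.insertNthEquiv]
      have hTrans : ∀ F : (Fin (n+1) → 𝒱) → ℝ,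
          ∫ v, F v ∂Measure.pi ν = ∫ y, F (e.symm y) ∂(ν 0).prod π' := by
        intro F
        rw [← hMP.integral_comp' (fun y => F (e.symm y))]
        simp
      -- measurability of (x, w) ↦ φ (cons x w)
      have hφcons : Measurable (fun y : 𝒱 × (Fin n → 𝒱) => φ (Fin.cons y.1 y.2)) := by
        have hfe : (fun y : 𝒱 × (Fin n → 𝒱) => φ (Fin.cons y.1 y.2))
            = fun y => φ (e.symm y) := by
          funext y; rw [← hesymm y.1 y.2]
        rw [hfe]
        exact hφ.comp e.symm.measurable
      set g : (Fin n → 𝒱) → ℝ := fun w => ∫ x, φ (Fin.cons x w) ∂ν 0 with hg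
      have hgmeas : Measurable g := by
        have := MeasureTheory.StronglyMeasurable.integral_prod_left (μ := ν 0)
          (f := fun x w => φ (Fin.cons x w)) hφcons.stronglyMeasurable
        exact this.measurable
      have hconsint : ∀ w, Integrable (fun x => φ (Fin.cons x w)) (ν 0) := fun w =>
        integrable_of_abs_le (hφcons.comp (measurable_id.prodMk measurable_const))
          (fun x => hM _)
      have hgM : ∀ w, |g w| ≤ M := fun w =>
        abs_integral_le_of_abs_le (hconsint w).aestronglyMeasurable (fun x => hM _)
      have hcons_ne : ∀ (x : 𝒱) (w w' : Fin n → 𝒱) (j : Fin n), (∀ k, k ≠ j → w k = w' k) →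
          (∀ k, k ≠ j.succ →
            (Fin.cons x w : Fin (n+1) → 𝒱) k = (Fin.cons x w' : Fin (n+1) → 𝒱) k) := by
        intro x w w' j hw k
        refine Fin.cases ?_ ?_ k
        · intro _; simp
        · intro l hk
          simp only [Fin.cons_succ]
          exact hw l (fun hlj => hk (by rw [hlj]))
      -- bounded differences for g
      have hgc : ∀ (j : Fin n) (w w' : Fin n → 𝒱), (∀ k, k ≠ j → w k = w' k) →
          |g w - g w'| ≤ c j.succ := by
        intro j w w' hw
        have hsub : g w - g w' = ∫ x, (φ (Fin.cons x w) - φ (Fin.cons x w')) ∂ν 0 := by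
          rw [integral_sub (hconsint w) (hconsint w')]
        rw [hsub]
        apply abs_integral_le_of_abs_le ((hconsint w).sub (hconsint w')).aestronglyMeasurable
        intro x
        exact hc j.succ _ _ (hcons_ne x w w' j hw)
      -- the mean of g is m
      have hφsymm_int : Integrable (fun y : 𝒱 × (Fin n → 𝒱) => φ (e.symm y)) ((ν 0).prod π') :=
        integrable_of_abs_le (hφ.comp e.symm.measurable) (fun y => hM _)
      have hgm : ∫ w, g w ∂π' = m := by
        have h1 : m = ∫ w, ∫ x, φ (e.symm (x, w)) ∂ν 0 ∂π' := by
          rw [hm, hTrans φ]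
          exact integral_prod_symm _ hφsymm_int
        rw [h1]
        refine integral_congr_ae (Filter.Eventually.of_forall fun w => ?_)
        simp only [hg, hesymm]
      -- positivity of c 0
      obtain ⟨x₀⟩ : Nonempty 𝒱 := nonempty_of_prob (ν 0)
      have hc0 : 0 ≤ c 0 := by
        have := hc 0 (fun _ => x₀) (fun _ => x₀) (fun _ _ => rfl)
        simpa using this
      set K : ℝ := Real.exp (t ^ 2 * c 0 ^ 2 / 8) with hK
      -- inner Hoeffding bound
      have hinner : ∀ w, ∫ x, Real.exp (t * (φ (Fin.cons x w) - m)) ∂ν 0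
          ≤ K * Real.exp (t * (g w - m)) := by
        intro w
        set b : ℝ := sSup (Set.range fun x => φ (Fin.cons x w)) with hb
        have hbdd : BddAbove (Set.range fun x => φ (Fin.cons x w)) :=
          ⟨M, by rintro y ⟨x, rfl⟩; exact (abs_le.1 (hM _)).2⟩
        have hne' : (Set.range fun x => φ (Fin.cons x w)).Nonempty := ⟨_, ⟨x₀, rfl⟩⟩
        have hub : ∀ x, φ (Fin.cons x w) ≤ b := fun x => le_csSup hbdd ⟨x, rfl⟩
        have hlb : ∀ x, b - c 0 ≤ φ (Fin.cons x w) := by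
          intro x
          have hble : b ≤ φ (Fin.cons x w) + c 0 := by
            apply csSup_le hne'
            rintro y ⟨x', rfl⟩
            have hd := hc 0 (Fin.cons x' w) (Fin.cons x w) (by
              intro k
              refine Fin.cases ?_ ?_ k
              · intro h; exact absurd rfl h
              · intro l _; simp)
            linarith [(abs_le.1 hd).1, (abs_le.1 hd).2]
          linarith
        have hXm : Measurable fun x => φ (Fin.cons x w) - g w :=
          (hφcons.comp (measurable_id.prodMk measurable_const)).sub measurable_const
        have h0 : ∫ x, (φ (Fin.cons x w) - g w) ∂ν 0 = 0 := by
          rw [integral_sub (hconsint w) (integrable_const _), integral_const]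
          simp [measure_univ, hg]
        have hH := hoeffding_lemma (ν 0) hXm (a := b - c 0 - g w) (b := b - g w)
          (fun x => ⟨by linarith [hlb x], by linarith [hub x]⟩) h0 t
        have hdiff : (b - g w - (b - c 0 - g w)) = c 0 := by ring
        rw [hdiff] at hH
        calc ∫ x, Real.exp (t * (φ (Fin.cons x w) - m)) ∂ν 0
            = ∫ x, Real.exp (t * (φ (Fin.cons x w) - g w)) * Real.exp (t * (g w - m)) ∂ν 0 := by
              refine integral_congr_ae (Filter.Eventually.of_forall fun x => ?_)
              simp only [← Real.exp_add]
              ring_nf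
          _ = (∫ x, Real.exp (t * (φ (Fin.cons x w) - g w)) ∂ν 0)
              * Real.exp (t * (g w - m)) := integral_mul_const _ _
          _ ≤ K * Real.exp (t * (g w - m)) := by
              apply mul_le_mul_of_nonneg_right _ (Real.exp_pos _).le
              exact hH
      -- global bound for the exponential integrand
      have hbound : ∀ r : ℝ, |r| ≤ M →
          |Real.exp (t * (r - m))| ≤ Real.exp (|t| * (M + |m|)) := by
        intro r hr
        rw [Real.abs_exp]
        apply Real.exp_le_exp.2
        calc t * (r - m) ≤ |t * (r - m)| := le_abs_self _
          _ = |t| * |r - m| := abs_mul _ _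
          _ ≤ |t| * (M + |m|) := by
              apply mul_le_mul_of_nonneg_left _ (abs_nonneg t)
              calc |r - m| ≤ |r| + |m| := abs_sub _ _
                _ ≤ M + |m| := by linarith
      have hφmint : Integrable (fun y : 𝒱 × (Fin n → 𝒱) =>
          Real.exp (t * (φ (e.symm y) - m))) ((ν 0).prod π') :=
        integrable_of_abs_le ((((hφ.comp e.symm.measurable).sub_const m).const_mul t).exp)
          (fun y => hbound _ (hM _))
      -- Fubini
      have hstep1 : ∫ v, Real.exp (t * (φ v - m)) ∂Measure.pi ν
          = ∫ w, ∫ x, Real.exp (t * (φ (Fin.cons x w) - m)) ∂ν 0 ∂π' := by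
        rw [hTrans (fun v => Real.exp (t * (φ v - m))), integral_prod_symm _ hφmint]
        refine integral_congr_ae (Filter.Eventually.of_forall fun w => ?_)
        refine integral_congr_ae (Filter.Eventually.of_forall fun x => ?_)
        simp only [hesymm]
      -- integrabilities for the outer comparison
      have hinner_meas : Measurable fun w =>
          ∫ x, Real.exp (t * (φ (Fin.cons x w) - m)) ∂ν 0 :=
        (MeasureTheory.StronglyMeasurable.integral_prod_left (μ := ν 0)
          (f := fun x w => Real.exp (t * (φ (Fin.cons x w) - m)))
          (((hφcons.sub_const m).const_mul t).exp).stronglyMeasurable).measurable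
      have hinner_int : Integrable (fun w =>
          ∫ x, Real.exp (t * (φ (Fin.cons x w) - m)) ∂ν 0) π' := by
        apply integrable_of_abs_le hinner_meas (C := Real.exp (|t| * (M + |m|)))
        intro w
        apply abs_integral_le_of_abs_le
          (((((hφcons.comp (measurable_id.prodMk measurable_const)).sub_const m).const_mul
            t).exp).aestronglyMeasurable)
        intro x
        exact hbound _ (hM _)
      have hK0 : 0 ≤ K := (Real.exp_pos _).le
      have hKint : Integrable (fun w => K * Real.exp (t * (g w - m))) π' := by
        apply integrable_of_abs_le ((((hgmeas.sub_const m).const_mul t).exp).const_mul K)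
          (C := K * Real.exp (|t| * (M + |m|)))
        intro w
        rw [abs_mul, abs_of_nonneg hK0]
        exact mul_le_mul_of_nonneg_left (hbound _ (hgM w)) hK0
      have houter := integral_mono hinner_int hKint hinner
      -- induction hypothesis
      have hIH := ih (fun j => ν j.succ) (fun j => hν _) g hgmeas M hgM
        (fun j => c j.succ) hgc t
      rw [← hπ'] at hIH
      rw [hgm] at hIH
      have hIH' : ∫ w, Real.exp (t * (g w - m)) ∂π'
          ≤ Real.exp (t ^ 2 * (∑ j : Fin n, c j.succ ^ 2) / 8) := hIH
      have hmul : ∫ w, K * Real.exp (t * (g w - m)) ∂π'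
          = K * ∫ w, Real.exp (t * (g w - m)) ∂π' := integral_const_mul _ _
      have hfin : K * Real.exp (t ^ 2 * (∑ j : Fin n, c j.succ ^ 2) / 8)
          = Real.exp (t ^ 2 * (∑ i, c i ^ 2) / 8) := by
        rw [hK, ← Real.exp_add, Fin.sum_univ_succ]
        congr 1
        ring
      rw [hstep1]
      refine le_trans houter ?_
      rw [hmul, ← hfin]
      exact mul_le_mul_of_nonneg_left hIH' hK0

lemma mcd_osc {𝒱 : Type*} {n : ℕ} (φ : (Fin n → 𝒱) → ℝ) (c : Fin n → ℝ)
    (hc : ∀ (i : Fin n) (v v' : Fin n → 𝒱), (∀ j, j ≠ i → v j = v' j) → |φ v - φ v'| ≤ c i)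
    (v v' : Fin n → 𝒱) : |φ v - φ v'| ≤ ∑ i, c i := by
  classical
  have key : ∀ s : Finset (Fin n), |φ (s.piecewise v' v) - φ v| ≤ ∑ i ∈ s, c i := by
    intro s
    induction s using Finset.induction_on with
    | empty => simp [Finset.piecewise_empty]
    | insert i s hi ih =>
        calc |φ ((insert i s).piecewise v' v) - φ v|
            ≤ |φ ((insert i s).piecewise v' v) - φ (s.piecewise v' v)|
              + |φ (s.piecewise v' v) - φ v| := abs_sub_le _ _ _
          _ ≤ c i + ∑ j ∈ s, c j := by
              refine add_le_add ?_ ih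
              refine hc i _ _ fun j hj => ?_
              exact Finset.piecewise_insert_of_ne _ _ _ hj
          _ = ∑ j ∈ insert i s, c j := (Finset.sum_insert hi).symm
  have := key Finset.univ
  rw [Finset.piecewise_univ] at this
  rwa [abs_sub_comm] at this

lemma mcd_chernoff {α : Type*} [MeasurableSpace α] (ρ : Measure α) [IsProbabilityMeasure ρ]
    {Y : α → ℝ} (hY : Measurable Y) {CY : ℝ} (hbd : ∀ x, |Y x| ≤ CY) {S ε : ℝ}
    (hS : 0 < S) (hε : 0 < ε)
    (hmgf : ∀ t : ℝ, ∫ x, Real.exp (t * Y x) ∂ρ ≤ Real.exp (t ^ 2 * S / 8)) :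
    (ρ {x | ε ≤ Y x}).toReal ≤ Real.exp (-2 * ε ^ 2 / S) := by
  set t : ℝ := 4 * ε / S with ht
  have htpos : 0 < t := by positivity
  have hint : Integrable (fun x => Real.exp (t * Y x)) ρ := by
    apply integrable_of_abs_le ((hY.const_mul t).exp) (C := Real.exp (|t| * CY))
    intro x
    rw [Real.abs_exp]
    apply Real.exp_le_exp.2
    calc t * Y x ≤ |t * Y x| := le_abs_self _
      _ = |t| * |Y x| := abs_mul _ _
      _ ≤ |t| * CY := mul_le_mul_of_nonneg_left (hbd x) (abs_nonneg t)
  have hmarkov := mul_meas_ge_le_integral_of_nonneg (μ := ρ)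
    (f := fun x => Real.exp (t * Y x))
    (Filter.Eventually.of_forall fun x => (Real.exp_pos _).le) hint (Real.exp (t * ε))
  have hsub : {x | ε ≤ Y x} ⊆ {x | Real.exp (t * ε) ≤ Real.exp (t * Y x)} := by
    intro x hx
    exact Real.exp_le_exp.2 (mul_le_mul_of_nonneg_left hx htpos.le)
  have hmono : (ρ {x | ε ≤ Y x}).toReal
      ≤ (ρ {x | Real.exp (t * ε) ≤ Real.exp (t * Y x)}).toReal :=
    ENNReal.toReal_mono (measure_ne_top _ _) (measure_mono hsub)
  have h1 : (ρ {x | Real.exp (t * ε) ≤ Real.exp (t * Y x)}).toReal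
      ≤ Real.exp (t ^ 2 * S / 8) / Real.exp (t * ε) := by
    rw [le_div_iff₀ (Real.exp_pos _)]
    calc (ρ {x | Real.exp (t * ε) ≤ Real.exp (t * Y x)}).toReal * Real.exp (t * ε)
        = Real.exp (t * ε) * (ρ {x | Real.exp (t * ε) ≤ Real.exp (t * Y x)}).toReal := by ring
      _ ≤ ∫ x, Real.exp (t * Y x) ∂ρ := hmarkov
      _ ≤ Real.exp (t ^ 2 * S / 8) := hmgf t
  have h2 : Real.exp (t ^ 2 * S / 8) / Real.exp (t * ε) = Real.exp (-2 * ε ^ 2 / S) := by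
    rw [← Real.exp_sub]
    congr 1
    rw [ht]
    field_simp
    ring
  rw [h2] at h1
  linarith

/-- McDiarmid's inequality: if `V₁,…,Vₙ` are independent random variables and
`φ` satisfies the bounded-difference condition with constants `cᵢ`, then
`P(|φ(V) − E[φ(V)]| ≥ ε) ≤ 2 exp(−2ε² / Σᵢ cᵢ²)`. -/
theorem mcdiarmid_inequality {Ω 𝒱 : Type*} [MeasurableSpace Ω] [MeasurableSpace 𝒱]
    {n : ℕ} (μ : Measure Ω) [IsProbabilityMeasure μ]
    (V : Fin n → Ω → 𝒱) (hV : ∀ i, Measurable (V i))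
    (hind : iIndepFun V μ)
    (φ : (Fin n → 𝒱) → ℝ) (hφ : Measurable φ)
    (c : Fin n → ℝ)
    (hc : ∀ (i : Fin n) (v v' : Fin n → 𝒱),
      (∀ j, j ≠ i → v j = v' j) → |φ v - φ v'| ≤ c i)
    (hint : Integrable (fun ω => φ (fun i => V i ω)) μ)
    (ε : ℝ) (hε : 0 < ε) :
    μ {ω | ε ≤ |φ (fun i => V i ω) - ∫ ω', φ (fun i => V i ω') ∂μ|}
      ≤ ENNReal.ofReal (2 * Real.exp (-2 * ε ^ 2 / ∑ i, (c i) ^ 2)) := by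
  classical
  set W : Ω → (Fin n → 𝒱) := fun ω i => V i ω with hW
  have hWmeas : Measurable W := measurable_pi_lambda _ hV
  set ρ : Measure (Fin n → 𝒱) := μ.map W with hρ
  haveI : IsProbabilityMeasure ρ := Measure.isProbabilityMeasure_map hWmeas.aemeasurable
  haveI : ∀ i, IsProbabilityMeasure (μ.map (V i)) :=
    fun i => Measure.isProbabilityMeasure_map (hV i).aemeasurable
  -- the joint distribution is the product of the marginals
  have hρpi : ρ = Measure.pi (fun i => μ.map (V i)) := by
    rw [hρ]
    refine (Measure.pi_eq fun s hs => ?_).symm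
    rw [Measure.map_apply hWmeas (MeasurableSet.univ_pi hs)]
    have hpre : W ⁻¹' Set.pi Set.univ s = ⋂ i ∈ Finset.univ, V i ⁻¹' s i := by
      ext ω; simp [hW, Set.mem_pi]
    rw [hpre, hind.measure_inter_preimage_eq_mul Finset.univ (fun i hi => hs i)]
    exact Finset.prod_congr rfl fun i _ => (Measure.map_apply (hV i) (hs i)).symm
  -- transfer the mean
  set m : ℝ := ∫ ω', φ (fun i => V i ω') ∂μ with hm
  have hmρ : ∫ v, φ v ∂ρ = m := by
    rw [hρ, integral_map hWmeas.aemeasurable hφ.aestronglyMeasurable]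
  -- transfer the event
  have hTmeas : MeasurableSet {v : Fin n → 𝒱 | ε ≤ |φ v - m|} :=
    measurableSet_le measurable_const ((hφ.sub_const m).abs)
  have hset : μ {ω | ε ≤ |φ (fun i => V i ω) - m|}
      = ρ {v | ε ≤ |φ v - m|} := by
    rw [hρ, Measure.map_apply hWmeas hTmeas]
    rfl
  rw [show {ω | ε ≤ |φ (fun i => V i ω) - ∫ ω', φ (fun i => V i ω') ∂μ|}
      = {ω | ε ≤ |φ (fun i => V i ω) - m|} from rfl, hset]
  -- boundedness of φ and nonnegativity of c
  obtain ⟨ω₀⟩ : Nonempty Ω := nonempty_of_prob μ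
  set v₀ : Fin n → 𝒱 := W ω₀ with hv₀
  set M : ℝ := |φ v₀| + ∑ i, c i with hM
  have hMb : ∀ v, |φ v| ≤ M := by
    intro v
    calc |φ v| ≤ |φ v - φ v₀| + |φ v₀| := by
          have := abs_sub_le (φ v) (φ v₀) 0
          simpa using this
      _ ≤ (∑ i, c i) + |φ v₀| := add_le_add_left (mcd_osc φ c hc v v₀) _
      _ = M := by rw [hM]; ring
  have hci : ∀ i, 0 ≤ c i := by
    intro i
    have := hc i v₀ v₀ (fun _ _ => rfl)
    simpa using this
  set S : ℝ := ∑ i, c i ^ 2 with hS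
  have hS0 : 0 ≤ S := Finset.sum_nonneg fun i _ => sq_nonneg _
  rcases eq_or_lt_of_le hS0 with hSzero | hSpos
  · -- degenerate case: all cᵢ = 0, φ is constant
    have hczero : ∀ i, c i = 0 := by
      intro i
      have hterm := (Finset.sum_eq_zero_iff_of_nonneg
        (fun j (_ : j ∈ Finset.univ) => sq_nonneg (c j))).1 hSzero.symm i (Finset.mem_univ i)
      exact pow_eq_zero_iff (n := 2) (by norm_num) |>.1 hterm
    have hφconst : ∀ v, φ v = φ v₀ := by
      intro v
      have h := mcd_osc φ c hc v v₀
      rw [show (∑ i, c i) = 0 from Finset.sum_eq_zero fun i _ => hczero i] at h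
      have := abs_nonneg (φ v - φ v₀)
      have : |φ v - φ v₀| = 0 := le_antisymm h this
      have := abs_eq_zero.1 this
      linarith
    have hmv : m = φ v₀ := by
      rw [hm]
      have : (fun ω' => φ (fun i => V i ω')) = fun _ => φ v₀ := funext fun ω' => hφconst _
      rw [this, integral_const]
      simp [measure_univ]
    have hempty : {v : Fin n → 𝒱 | ε ≤ |φ v - m|} = ∅ := by
      ext v
      simp only [Set.mem_setOf_eq, Set.mem_empty_iff_false, iff_false, not_le]
      rw [hφconst v, hmv]
      simpa using hε
    rw [hempty]
    simp
  · -- main case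
    set E : ℝ := Real.exp (-2 * ε ^ 2 / S) with hE
    -- MGF bounds
    have hmgf₁ : ∀ t : ℝ, ∫ v, Real.exp (t * (φ v - m)) ∂ρ ≤ Real.exp (t ^ 2 * S / 8) := by
      intro t
      have := mcd_mgf n (fun i => μ.map (V i)) (fun i => inferInstance) φ hφ M hMb c hc t
      rw [← hρpi] at this
      rwa [hmρ] at this
    have hmgf₂ : ∀ t : ℝ, ∫ v, Real.exp (t * (m - φ v)) ∂ρ ≤ Real.exp (t ^ 2 * S / 8) := by
      intro t
      have hcneg : ∀ (i : Fin n) (v v' : Fin n → 𝒱), (∀ j, j ≠ i → v j = v' j) →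
          |(-φ v) - (-φ v')| ≤ c i := by
        intro i v v' hv
        rw [show (-φ v) - (-φ v') = -(φ v - φ v') from by ring, abs_neg]
        exact hc i v v' hv
      have := mcd_mgf n (fun i => μ.map (V i)) (fun i => inferInstance) (fun v => -φ v)
        hφ.neg M (fun v => by rw [abs_neg]; exact hMb v) c hcneg t
      rw [← hρpi] at this
      rw [integral_neg, hmρ] at this
      have heq : ∀ v, -φ v - -m = m - φ v := fun v => by ring
      simp only [heq] at this
      exact this
    -- Chernoff on both tails
    have hch₁ := mcd_chernoff ρ (hφ.sub_const m)
      (CY := M + |m|) (fun v => by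
        have := abs_sub (φ v) m
        calc |φ v - m| ≤ |φ v| + |m| := abs_sub _ _
          _ ≤ M + |m| := add_le_add_left (hMb v) _) hSpos hε hmgf₁
    have hch₂ := mcd_chernoff ρ (measurable_const.sub hφ)
      (CY := M + |m|) (fun v => by
        calc |m - φ v| ≤ |φ v - m| := by rw [abs_sub_comm]
          _ ≤ |φ v| + |m| := abs_sub _ _
          _ ≤ M + |m| := add_le_add_left (hMb v) _) hSpos hε hmgf₂
    -- union bound
    have hsub : {v : Fin n → 𝒱 | ε ≤ |φ v - m|}
        ⊆ {v | ε ≤ φ v - m} ∪ {v | ε ≤ m - φ v} := by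
      intro v hv
      simp only [Set.mem_setOf_eq] at hv
      rcases le_or_gt m (φ v) with hcase | hcase
      · left
        simp only [Set.mem_setOf_eq]
        rwa [abs_of_nonneg (by linarith)] at hv
      · right
        simp only [Set.mem_setOf_eq]
        rw [abs_of_neg (by linarith)] at hv
        linarith
    have hfin : ρ {v : Fin n → 𝒱 | ε ≤ |φ v - m|} ≠ ⊤ := measure_ne_top _ _
    rw [← ENNReal.ofReal_toReal hfin]
    apply ENNReal.ofReal_le_ofReal
    calc (ρ {v : Fin n → 𝒱 | ε ≤ |φ v - m|}).toReal
        ≤ (ρ ({v | ε ≤ φ v - m} ∪ {v | ε ≤ m - φ v})).toReal :=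
          ENNReal.toReal_mono (measure_ne_top _ _) (measure_mono hsub)
      _ ≤ (ρ {v | ε ≤ φ v - m}).toReal + (ρ {v | ε ≤ m - φ v}).toReal := by
          rw [← ENNReal.toReal_add (measure_ne_top _ _) (measure_ne_top _ _)]
          exact ENNReal.toReal_mono (by
            exact ENNReal.add_ne_top.2 ⟨measure_ne_top _ _, measure_ne_top _ _⟩)
            (measure_union_le _ _)
      _ ≤ E + E := add_le_add hch₁ hch₂
      _ = 2 * Real.exp (-2 * ε ^ 2 / S) := by rw [hE]; ring
end
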